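/- arXiv:2603.18858 — 4 statements merged into one kernel-verified Lean document; each statement's English description precedes it below -/
import Mathlib

section
/- For all integers i ≥ 0 and c ≥ 0, f(i+c) = 1 if and only if frac(i·φ) lies in the circular open interval from frac(−(c+1)φ) to frac(−(c+2)φ) (in the sense that frac((i+c)φ) lies in the circular interval from frac(−φ) to frac(−2φ)). -/
noncomputable def phi : ℝ := (1 + Real.sqrt 5) / 2

noncomputable def fibWord (i : ℕ) : ℤ :=
  ⌊((i : ℝ) + 2) * (2 - phi)⌋ - ⌊((i : ℝ) + 1) * (2 - phi)⌋

/-- The circular open interval `(x, y) mod 1`. -/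
noncomputable def circIoo (x y : ℝ) : Set ℝ :=
  if Int.fract x < Int.fract y then Set.Ioo (Int.fract x) (Int.fract y)
  else Set.Ioo (Int.fract x) 1 ∪ Set.Ico 0 (Int.fract y)

noncomputable def gg : ℝ := 2 - phi

lemma phi_irr : Irrational phi := by
  have h5 : Irrational (Real.sqrt 5) := by
    have := (Nat.prime_five).irrational_sqrt
    simpa using this
  have h1 : Irrational ((1:ℕ) + Real.sqrt 5) := h5.natCast_add 1
  have h2 : Irrational (((1:ℕ) + Real.sqrt 5) / (2:ℕ)) := h1.div_natCast (by norm_num)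
  unfold phi
  convert h2 using 2 <;> norm_num

lemma gg_irr : Irrational gg := phi_irr.intCast_sub 2

lemma phi_bounds : 1 < phi ∧ phi < 2 := by
  have h5 : (2:ℝ) < Real.sqrt 5 := by
    nlinarith [Real.sq_sqrt (by norm_num : (5:ℝ) ≥ 0), Real.sqrt_nonneg 5]
  have h5' : Real.sqrt 5 < 3 := by
    nlinarith [Real.sq_sqrt (by norm_num : (5:ℝ) ≥ 0), Real.sqrt_nonneg 5]
  constructor <;> (unfold phi; linarith)

lemma gg_pos : 0 < gg := by have := phi_bounds; unfold gg; linarith [this.2]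
lemma gg_lt_one : gg < 1 := by have := phi_bounds; unfold gg; linarith [this.1]

/-- `n*gg` is never an integer for `n ≠ 0`. -/
lemma gg_mul_not_int {n : ℕ} (hn : n ≠ 0) (z : ℤ) : (n:ℝ) * gg ≠ z :=
  (gg_irr.natCast_mul hn).ne_int z

lemma fract_add_fract (x y : ℝ) :
    Int.fract (x + y) = Int.fract (Int.fract x + Int.fract y) := by
  conv_lhs => rw [← Int.floor_add_fract x, ← Int.floor_add_fract y]
  rw [show ((⌊x⌋:ℝ) + Int.fract x + ((⌊y⌋:ℝ) + Int.fract y))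
      = ((⌊x⌋ + ⌊y⌋ : ℤ) : ℝ) + (Int.fract x + Int.fract y) by push_cast; ring,
    Int.fract_intCast_add]

lemma fract_fract_add (x y : ℝ) :
    Int.fract (Int.fract x + y) = Int.fract (x + y) := by
  rw [fract_add_fract x y, fract_add_fract (Int.fract x) y, Int.fract_fract]

/-- fibWord criterion. -/
lemma fib_one (n : ℕ) : fibWord n = 1 ↔ 1 - gg < Int.fract (((n:ℝ) + 1) * gg) := by
  have hgg : gg = 2 - phi := rfl
  have hg0 := gg_pos
  have hg1 := gg_lt_one
  have hfl := Int.floor_add_fract (((n:ℝ) + 1) * gg)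
  have hfr := Int.fract_nonneg (((n:ℝ) + 1) * gg)
  have hfr1 := Int.fract_lt_one (((n:ℝ) + 1) * gg)
  have hkey : fibWord n = ⌊Int.fract (((n:ℝ)+1) * gg) + gg⌋ := by
    unfold fibWord
    rw [← hgg]
    rw [show ((n:ℝ) + 2) * gg
        = ((⌊((n:ℝ)+1)*gg⌋:ℤ):ℝ) + (Int.fract (((n:ℝ)+1)*gg) + gg) by linarith,
      Int.floor_intCast_add]
    omega
  have hne : Int.fract (((n:ℝ)+1) * gg) + gg ≠ 1 := by
    intro h
    refine gg_mul_not_int (n := n + 2) (by omega) (1 + ⌊((n:ℝ)+1)*gg⌋) ?_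
    push_cast
    linarith
  rw [hkey]
  constructor
  · intro h
    have h' := (Int.floor_eq_iff.mp h).1
    push_cast at h'
    rcases lt_or_eq_of_le (by linarith : 1 - gg ≤ Int.fract (((n:ℝ)+1) * gg)) with h'' | h''
    · exact h''
    · exact absurd (by linarith) hne
  · intro h
    rw [Int.floor_eq_iff]
    push_cast
    constructor <;> linarith

lemma fract_nat_phi (n : ℕ) :
    Int.fract ((n:ℝ) * phi) = Int.fract (-((n:ℝ) * gg)) := by
  rw [show (n:ℝ) * phi = -((n:ℝ) * gg) + ((2 * n : ℤ):ℝ) by unfold gg; push_cast; ring,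
    Int.fract_add_intCast]

lemma fract_neg_nat_phi (n : ℕ) :
    Int.fract (-(n:ℝ) * phi) = Int.fract ((n:ℝ) * gg) := by
  rw [show -(n:ℝ) * phi = (n:ℝ) * gg + ((-2 * n : ℤ):ℝ) by unfold gg; push_cast; ring,
    Int.fract_add_intCast]

theorem stmt1 (i c : ℕ) :
    fibWord (i + c) = 1 ↔
      Int.fract ((i : ℝ) * phi) ∈
        circIoo (-(((c : ℝ) + 1)) * phi) (-(((c : ℝ) + 2)) * phi) := by
  have hg0 := gg_pos
  have hg1 := gg_lt_one
  set a := Int.fract (((c:ℝ) + 1) * gg) with ha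
  set b := Int.fract (((c:ℝ) + 2) * gg) with hb
  set u := Int.fract ((i:ℝ) * gg) with hu
  have ha0 : 0 ≤ a := Int.fract_nonneg _
  have ha1 : a < 1 := Int.fract_lt_one _
  have hb0 : 0 ≤ b := Int.fract_nonneg _
  have hb1 : b < 1 := Int.fract_lt_one _
  have hu0 : 0 ≤ u := Int.fract_nonneg _
  have hu1 : u < 1 := Int.fract_lt_one _
  have hapos : 0 < a := by
    rcases lt_or_eq_of_le ha0 with h | h; · exact h
    exfalso
    refine gg_mul_not_int (n := c+1) (by omega) ⌊((c:ℝ)+1)*gg⌋ ?_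
    have := Int.floor_add_fract (((c:ℝ)+1) * gg)
    rw [← ha] at this
    push_cast
    linarith
  have hbpos : 0 < b := by
    rcases lt_or_eq_of_le hb0 with h | h; · exact h
    exfalso
    refine gg_mul_not_int (n := c+2) (by omega) ⌊((c:ℝ)+2)*gg⌋ ?_
    have := Int.floor_add_fract (((c:ℝ)+2) * gg)
    rw [← hb] at this
    push_cast
    linarith
  have hbeq : Int.fract (a + gg) = b := by
    rw [ha, fract_fract_add,
      show ((c:ℝ)+1)*gg + gg = ((c:ℝ)+2)*gg by ring, ← hb]
  have hag_ne : a + gg ≠ 1 := by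
    intro h
    refine gg_mul_not_int (n := c+2) (by omega) (1 + ⌊((c:ℝ)+1)*gg⌋) ?_
    have := Int.floor_add_fract (((c:ℝ)+1) * gg)
    rw [← ha] at this
    push_cast
    nlinarith
  have hua_ne : u + a ≠ 1 := by
    intro h
    refine gg_mul_not_int (n := i+c+1) (by omega) (1 + ⌊(i:ℝ)*gg⌋ + ⌊((c:ℝ)+1)*gg⌋) ?_
    have h1 := Int.floor_add_fract ((i:ℝ) * gg)
    have h2 := Int.floor_add_fract (((c:ℝ)+1) * gg)
    rw [← hu] at h1; rw [← ha] at h2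
    push_cast
    nlinarith
  have hFeq : Int.fract (((((i+c):ℕ):ℝ) + 1) * gg) = Int.fract (u + a) := by
    rw [hu, ha, ← fract_add_fract,
      show (i:ℝ)*gg + ((c:ℝ)+1)*gg = ((((i+c):ℕ):ℝ)+1)*gg by push_cast; ring]
  rw [fib_one, hFeq]
  have hR1 : Int.fract (-(((c : ℝ) + 1)) * phi) = a := by
    rw [show -(((c:ℝ)+1)) * phi = -(((c+1 : ℕ):ℝ)) * phi by push_cast; ring,
      fract_neg_nat_phi, ha]
    push_cast
    ring_nf
  have hR2 : Int.fract (-(((c : ℝ) + 2)) * phi) = b := by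
    rw [show -(((c:ℝ)+2)) * phi = -(((c+2 : ℕ):ℝ)) * phi by push_cast; ring,
      fract_neg_nat_phi, hb]
    push_cast
    ring_nf
  have hiu : i = 0 → u = 0 := by intro h; rw [hu, h]; simp
  have hiu' : i ≠ 0 → u ≠ 0 := by
    intro hi hc
    refine gg_mul_not_int hi ⌊(i:ℝ)*gg⌋ ?_
    have := Int.floor_add_fract ((i:ℝ) * gg)
    rw [← hu] at this
    linarith
  have hU : Int.fract ((i:ℝ) * phi) = if i = 0 then 0 else 1 - u := by
    split_ifs with h
    · subst h; simp
    · rw [fract_nat_phi, Int.fract_neg (by rw [← hu]; exact hiu' h), ← hu]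
  unfold circIoo
  rw [hR1, hR2, hU]
  rcases lt_or_gt_of_ne hag_ne with hcase | hcase
  · -- b = a + gg, interval is Ioo a b
    have hb' : b = a + gg := by rw [← hbeq, Int.fract_eq_self.mpr ⟨by linarith, hcase⟩]
    rw [if_pos (by rw [hb']; linarith)]
    rcases lt_or_gt_of_ne hua_ne with h2 | h2
    · rw [Int.fract_eq_self.mpr ⟨by linarith, h2⟩]
      simp only [Set.mem_Ioo]
      split_ifs with hi
      · have hu' := hiu hi
        constructor <;> intro h
        · exfalso; linarith
        · exfalso; linarith [h.1]
      · constructor <;> intro h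
        · exact ⟨by linarith, by rw [hb']; linarith⟩
        · rw [hb'] at h; exact by linarith [h.2]
    · have hfr2 : Int.fract (u + a) = u + a - 1 := by
        rw [← Int.fract_sub_intCast (u + a) 1,
          Int.fract_eq_self.mpr ⟨by push_cast; linarith, by push_cast; linarith⟩]
        push_cast; ring
      rw [hfr2]
      simp only [Set.mem_Ioo]
      split_ifs with hi
      · have hu' := hiu hi
        exfalso; linarith
      · constructor <;> intro h
        · exfalso; linarith
        · exfalso; rw [hb'] at h; linarith [h.1, h.2]
  · -- b = a + gg - 1, interval is Ioo a 1 ∪ Ico 0 b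
    have hb' : b = a + gg - 1 := by
      rw [← hbeq, ← Int.fract_sub_intCast (a + gg) 1,
        Int.fract_eq_self.mpr ⟨by push_cast; linarith, by push_cast; linarith⟩]
      push_cast; ring
    rw [if_neg (by rw [hb']; push_neg; linarith)]
    rcases lt_or_gt_of_ne hua_ne with h2 | h2
    · rw [Int.fract_eq_self.mpr ⟨by linarith, h2⟩]
      simp only [Set.mem_union, Set.mem_Ioo, Set.mem_Ico]
      split_ifs with hi
      · have hu' := hiu hi
        constructor <;> intro h
        · exact Or.inr ⟨le_refl 0, hbpos⟩
        · linarith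
      · have hupos : 0 < u := lt_of_le_of_ne hu0 (Ne.symm (hiu' hi))
        constructor <;> intro h
        · exact Or.inl ⟨by linarith, by linarith⟩
        · rcases h with h | h
          · linarith [h.1]
          · exfalso; rw [hb'] at h; linarith [h.2]
    · have hfr2 : Int.fract (u + a) = u + a - 1 := by
        rw [← Int.fract_sub_intCast (u + a) 1,
          Int.fract_eq_self.mpr ⟨by push_cast; linarith, by push_cast; linarith⟩]
        push_cast; ring
      rw [hfr2]
      simp only [Set.mem_union, Set.mem_Ioo, Set.mem_Ico]
      split_ifs with hi
      · have hu' := hiu hi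
        exfalso; linarith
      · have hupos : 0 < u := lt_of_le_of_ne hu0 (Ne.symm (hiu' hi))
        constructor <;> intro h
        · exact Or.inr ⟨by linarith, by rw [hb']; linarith⟩
        · rcases h with h | h
          · exfalso; linarith [h.1]
          · rw [hb'] at h; linarith [h.2]
end

section
/- Every nonnegative integer n has a unique Zeckendorf representation: there exists a unique finite set S of integers, each ≥ 2, containing no two consecutive integers, such that n = ∑_{i∈S} F_i. -/
/-- `S` is a Zeckendorf representation of `n`: indices are `≥ 2`, no two consecutive,
and the corresponding Fibonacci numbers sum to `n`. -/
def ZeckRep (S : Finset ℕ) (n : ℕ) : Prop :=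
  (∀ i ∈ S, 2 ≤ i) ∧ (∀ i ∈ S, i + 1 ∉ S) ∧ ∑ i ∈ S, Nat.fib i = n

open List Nat

local instance : IsTrans ℕ fun a b ↦ b + 2 ≤ a where
  trans _a _b _c hba hcb := hcb.trans <| le_self_add.trans hba

private lemma zeckRep_toFinset {l : List ℕ} (hl : l.IsZeckendorfRep) :
    ZeckRep l.toFinset (l.map Nat.fib).sum := by
  have hp : (l ++ [0]).Pairwise (fun a b ↦ b + 2 ≤ a) := List.isChain_iff_pairwise.mp hl
  rw [List.pairwise_append] at hp
  obtain ⟨h1, -, h3⟩ := hp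
  have hge : ∀ i ∈ l, 2 ≤ i := fun i hi => by
    simpa using h3 i hi 0 (List.mem_singleton_self 0)
  have hnd : l.Nodup := h1.imp (fun h => by omega)
  have hsym : l.Pairwise (fun a b ↦ b + 2 ≤ a ∨ a + 2 ≤ b) := h1.imp (fun h => Or.inl h)
  refine ⟨fun i hi => hge i (List.mem_toFinset.mp hi), fun i hi hi1 => ?_, ?_⟩
  · rw [List.mem_toFinset] at hi hi1
    have := (haveI : Std.Symm (fun a b : ℕ ↦ b + 2 ≤ a ∨ a + 2 ≤ b) := ⟨by intro a b h; tauto⟩; List.Pairwise.forall hsym hi hi1 (by omega))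
    omega
  · rw [List.sum_toFinset _ hnd]

private lemma zeckRep_unique {S : Finset ℕ} {n : ℕ} (h : ZeckRep S n) :
    S = (Nat.zeckendorf n).toFinset := by
  obtain ⟨h1, h2, h3⟩ := h
  set l : List ℕ := (S.sort (· ≤ ·)).reverse with hld
  have hnd : (S.sort (· ≤ ·)).Nodup := S.sort_nodup _
  have hsorted : (S.sort (· ≤ ·)).Pairwise (· ≤ ·) := Finset.pairwise_sort (s := S) (r := (· ≤ ·))
  have hpair : (S.sort (· ≤ ·)).Pairwise (fun a b ↦ a + 2 ≤ b) := by
    rw [List.pairwise_iff_forall_sublist]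
    intro a b hsub
    have hab := List.pairwise_iff_forall_sublist.mp hsorted hsub
    have hne := List.pairwise_iff_forall_sublist.mp (hnd : List.Pairwise (· ≠ ·) _) hsub
    have ha : a ∈ S := (S.mem_sort _).mp (hsub.subset (by simp))
    have hb : b ∈ S := (S.mem_sort _).mp (hsub.subset (by simp))
    rcases eq_or_ne b (a + 1) with rfl | hba
    · exact absurd hb (h2 a ha)
    · omega
  have hrep : l.IsZeckendorfRep := by
    rw [List.IsZeckendorfRep, List.isChain_iff_pairwise, List.pairwise_append]
    refine ⟨List.pairwise_reverse.mpr (hpair.imp fun h => h), by simp, ?_⟩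
    intro a hal b hb
    rw [List.mem_singleton] at hb
    subst hb
    have : a ∈ S := by simpa [hld] using hal
    simpa using h1 a this
  have hsum : (l.map Nat.fib).sum = n := by
    rw [hld, List.map_reverse, List.sum_reverse, ← List.sum_toFinset _ hnd,
      Finset.sort_toFinset]
    exact h3
  have := Nat.zeckendorf_sum_fib hrep
  rw [hsum] at this
  rw [this, hld, List.toFinset_reverse, Finset.sort_toFinset]

theorem stmt6 (n : ℕ) : ∃! S : Finset ℕ, ZeckRep S n := by
  refine ⟨(Nat.zeckendorf n).toFinset, ?_, fun S hS => zeckRep_unique hS⟩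
  have := zeckRep_toFinset (Nat.isZeckendorfRep_zeckendorf n)
  rwa [Nat.sum_zeckendorf_fib] at this
end

section
/- For every integer n ≥ 1, there is a unique pair (k, m) with k ≥ 2, F_k ≥ n, F_{k−1} < n (for n ≥ 2; and k = 2 for n = 1), and m = F_k − n satisfying 0 ≤ m ≤ F_{k−3} + F_{k−5} + ⋯; moreover if m is written in Zeckendorf form m = ∑_{2≤i≤t} a_i F_i then t ≤ k − 3. That is: if F_k is the smallest Fibonacci number ≥ n (with k ≥ 2), then the largest index appearing in the Zeckendorf representation of F_k − n is at most k − 3 (when F_k − n > 0). -/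
theorem stmt7 (n k : ℕ) (hn : 1 ≤ n) (hk : 2 ≤ k)
    (hge : n ≤ Nat.fib k)
    (hsmallest : ∀ j, 2 ≤ j → n ≤ Nat.fib j → Nat.fib k ≤ Nat.fib j)
    (S : Finset ℕ) (hS : ZeckRep S (Nat.fib k - n)) (hpos : 0 < Nat.fib k - n) :
    ∀ i ∈ S, i ≤ k - 3 := by
  obtain ⟨h2, hnc, hsum⟩ := hS
  -- k = 2 is impossible since then fib k = 1 = n and fib k - n = 0
  have hk3 : 3 ≤ k := by
    rcases Nat.lt_or_ge k 3 with h | h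
    · interval_cases k
      · simp [Nat.fib] at hge hpos
        omega
    · exact h
  -- n > fib (k-1)
  have hlt : Nat.fib (k - 1) < n := by
    by_contra h
    push_neg at h
    have h1 := hsmallest (k - 1) (by omega) h
    have h2' : Nat.fib (k - 1) + Nat.fib (k - 2) = Nat.fib k := by
      have : k - 2 + 1 = k - 1 := by omega
      have := Nat.fib_add_two (n := k - 2)
      rw [show k - 2 + 2 = k by omega, show k - 2 + 1 = k - 1 by omega] at this
      omega
    have hfibpos : 0 < Nat.fib (k - 2) := Nat.fib_pos.mpr (by omega)
    omega
  -- m < fib (k-2)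
  have hm : Nat.fib k - n < Nat.fib (k - 2) := by
    have h2' : Nat.fib (k - 1) + Nat.fib (k - 2) = Nat.fib k := by
      have := Nat.fib_add_two (n := k - 2)
      rw [show k - 2 + 2 = k by omega, show k - 2 + 1 = k - 1 by omega] at this
      omega
    omega
  intro i hi
  by_contra hcon
  push_neg at hcon
  have hik : k - 2 ≤ i := by omega
  have hfle : Nat.fib (k - 2) ≤ Nat.fib i := Nat.fib_mono hik
  have hle : Nat.fib i ≤ ∑ j ∈ S, Nat.fib j :=
    Finset.single_le_sum (fun j _ => Nat.zero_le _) hi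
  omega
end

section
/- If n is a nonnegative integer whose Zeckendorf representation ends in digit 0 (i.e., F_2 does not appear, equivalently f(n) = 0 where f is the Fibonacci word), then both appended numbers n^{(0)} and n^{(1)} have valid Zeckendorf representations, and f(n) = 1 if and only if the least significant Zeckendorf digit of n is 1. -/
lemma phi_sq : phi ^ 2 = phi + 1 := by
  have h : Real.sqrt 5 ^ 2 = 5 := Real.sq_sqrt (by norm_num)
  unfold phi; nlinarith [h]

lemma fib_key : ∀ i : ℕ, (Nat.fib (i+2) : ℝ) * (2 - phi) = Nat.fib i + (1 - phi)^(i+2) := by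
  intro i
  induction i using Nat.twoStepInduction with
  | zero => simp [Nat.fib]; linear_combination -phi_sq
  | one =>
      simp [Nat.fib]
      linear_combination (phi - 2) * phi_sq
  | more m ih1 ih2 =>
      have h1 : Nat.fib (m + 4) = Nat.fib (m+2) + Nat.fib (m+3) := by
        rw [show m+4 = (m+2)+2 from rfl, Nat.fib_add_two]
      have h2 : ((Nat.fib (m + 2) : ℕ) : ℝ) = Nat.fib m + Nat.fib (m+1) := by
        rw [Nat.fib_add_two]; push_cast; ring
      have hp : (1 - phi)^(m+4) = (1-phi)^(m+2) + (1-phi)^(m+3) := by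
        have h : (1-phi)^2 = 1 + (1-phi) := by linear_combination phi_sq
        calc (1 - phi)^(m+4) = (1-phi)^(m+2) * (1-phi)^2 := by ring
        _ = (1-phi)^(m+2) * (1 + (1-phi)) := by rw [h]
        _ = (1-phi)^(m+2) + (1-phi)^(m+3) := by ring
      rw [h1]
      push_cast
      rw [hp]
      linear_combination ih1 + ih2 - h2

lemma phi_gt : (3/2 : ℝ) < phi := by
  have h : (2:ℝ) < Real.sqrt 5 := by
    nlinarith [Real.sq_sqrt (show (0:ℝ) ≤ 5 by norm_num), Real.sqrt_nonneg 5]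
  unfold phi; linarith
lemma phi_lt : phi < (17/10 : ℝ) := by
  have h : Real.sqrt 5 < 12/5 := by
    nlinarith [Real.sq_sqrt (show (0:ℝ) ≤ 5 by norm_num), Real.sqrt_nonneg 5]
  unfold phi; linarith

lemma sum_abs_lt : ∀ (m : ℕ) (S : Finset ℕ) (k : ℕ), S.card ≤ m →
    (∀ i ∈ S, k ≤ i) → (∀ i ∈ S, i+1 ∉ S) →
    ∑ i ∈ S, (phi - 1)^i < (phi - 1)^k * phi := by
  intro m
  induction m with
  | zero =>
      intro S k hcard _ _
      have : S = ∅ := Finset.card_eq_zero.mp (Nat.le_zero.mp hcard)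
      subst this
      simp only [Finset.sum_empty]
      have h01 : (0:ℝ) < phi - 1 := by have := phi_gt; linarith
      have hp : (0:ℝ) < phi := by have := phi_gt; linarith
      exact mul_pos (pow_pos h01 k) hp
  | succ m ih =>
      intro S k hcard hk hc
      rcases S.eq_empty_or_nonempty with rfl | hne
      · simp only [Finset.sum_empty]
        have h01 : (0:ℝ) < phi - 1 := by have := phi_gt; linarith
        have hp : (0:ℝ) < phi := by have := phi_gt; linarith
        exact mul_pos (pow_pos h01 k) hp
      · set a := S.min' hne with ha
        have haS : a ∈ S := S.min'_mem hne
        have hak : k ≤ a := hk a haS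
        have hk' : ∀ i ∈ S.erase a, a + 2 ≤ i := by
          intro i hi
          have hiS := Finset.mem_of_mem_erase hi
          have h1 : a ≤ i := S.min'_le i hiS
          have h2 : i ≠ a := Finset.ne_of_mem_erase hi
          have h3 : i ≠ a + 1 := by
            intro h; exact hc a haS (h ▸ hiS)
          omega
        have hc' : ∀ i ∈ S.erase a, i + 1 ∉ S.erase a := by
          intro i hi h
          exact hc i (Finset.mem_of_mem_erase hi) (Finset.mem_of_mem_erase h)
        have hcard' : (S.erase a).card ≤ m := by
          have := Finset.card_erase_of_mem haS
          have := Finset.card_pos.mpr hne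
          omega
        have hih := ih (S.erase a) (a+2) hcard' hk' hc'
        have hsplit : (phi-1)^a + ∑ i ∈ S.erase a, (phi - 1)^i = ∑ i ∈ S, (phi - 1)^i :=
          Finset.add_sum_erase S _ haS
        have h01 : (0:ℝ) < phi - 1 := by have := phi_gt; linarith
        have h1 : phi - 1 < 1 := by have := phi_lt; linarith
        have key : (phi-1)^a + (phi-1)^(a+2) * phi = (phi-1)^a * phi := by
          have e : (phi-1)^2 * phi = phi - 1 := by linear_combination (phi - 1) * phi_sq
          calc (phi-1)^a + (phi-1)^(a+2) * phi = (phi-1)^a * (1 + (phi-1)^2 * phi) := by ring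
          _ = (phi-1)^a * (1 + (phi - 1)) := by rw [e]
          _ = (phi-1)^a * phi := by ring
        have hmono : (phi-1)^a ≤ (phi-1)^k :=
          pow_le_pow_of_le_one (le_of_lt h01) (le_of_lt h1) hak
        have hphi : (0:ℝ) < phi := by have := phi_gt; linarith
        calc ∑ i ∈ S, (phi - 1)^i = (phi-1)^a + ∑ i ∈ S.erase a, (phi - 1)^i := hsplit.symm
        _ < (phi-1)^a + (phi-1)^(a+2) * phi := by linarith
        _ = (phi-1)^a * phi := key
        _ ≤ (phi-1)^k * phi := by
            exact mul_le_mul_of_nonneg_right hmono (le_of_lt hphi)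

lemma sum_upper (S : Finset ℕ) (k : ℕ) (hk : ∀ i ∈ S, Even i → k ≤ i)
    (hc : ∀ i ∈ S, i+1 ∉ S) : ∑ i ∈ S, (1 - phi)^i < (phi - 1)^k * phi := by
  have hsplit := Finset.sum_filter_add_sum_filter_not S (fun i => Even i) (fun i => (1-phi)^i)
  have hodd : ∑ i ∈ S.filter (fun i => ¬ Even i), (1-phi)^i ≤ 0 := by
    apply Finset.sum_nonpos
    intro i hi
    have : Odd i := Nat.not_even_iff_odd.mp (Finset.mem_filter.mp hi).2
    exact this.pow_nonpos (by have := phi_gt; linarith)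
  have heven : ∑ i ∈ S.filter (fun i => Even i), (1-phi)^i
      = ∑ i ∈ S.filter (fun i => Even i), (phi-1)^i := by
    apply Finset.sum_congr rfl
    intro i hi
    have he : Even i := (Finset.mem_filter.mp hi).2
    rw [show (1-phi) = -(phi-1) by ring, he.neg_pow]
  have hb := sum_abs_lt (S.filter (fun i => Even i)).card (S.filter (fun i => Even i)) k
    le_rfl
    (fun i hi => hk i (Finset.mem_filter.mp hi).1 (Finset.mem_filter.mp hi).2)
    (fun i hi h => hc i (Finset.mem_filter.mp hi).1 (Finset.mem_filter.mp h).1)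
  linarith [hsplit, hodd, heven, hb]

lemma sum_lower (S : Finset ℕ) (k : ℕ) (hk : ∀ i ∈ S, ¬ Even i → k ≤ i)
    (hc : ∀ i ∈ S, i+1 ∉ S) : -((phi - 1)^k * phi) < ∑ i ∈ S, (1 - phi)^i := by
  have hsplit := Finset.sum_filter_add_sum_filter_not S (fun i => Even i) (fun i => (1-phi)^i)
  have heven : 0 ≤ ∑ i ∈ S.filter (fun i => Even i), (1-phi)^i := by
    apply Finset.sum_nonneg
    intro i hi
    have he : Even i := (Finset.mem_filter.mp hi).2
    rw [show (1-phi) = -(phi-1) by ring, he.neg_pow]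
    exact pow_nonneg (by have := phi_gt; linarith) i
  have hodd : ∑ i ∈ S.filter (fun i => ¬ Even i), (1-phi)^i
      = -∑ i ∈ S.filter (fun i => ¬ Even i), (phi-1)^i := by
    rw [← Finset.sum_neg_distrib]
    apply Finset.sum_congr rfl
    intro i hi
    have ho : Odd i := Nat.not_even_iff_odd.mp (Finset.mem_filter.mp hi).2
    rw [show (1-phi) = -(phi-1) by ring, ho.neg_pow]
  have hb := sum_abs_lt (S.filter (fun i => ¬ Even i)).card (S.filter (fun i => ¬ Even i)) k
    le_rfl
    (fun i hi => hk i (Finset.mem_filter.mp hi).1 (Finset.mem_filter.mp hi).2)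
    (fun i hi h => hc i (Finset.mem_filter.mp hi).1 (Finset.mem_filter.mp h).1)
  linarith [hsplit, heven, hodd, hb]

theorem stmt14 (n : ℕ) (S : Finset ℕ) (hS : ZeckRep S n) :
    (fibWord n = 1 ↔ 2 ∈ S) ∧
    (fibWord n = 0 →
      ZeckRep (S.image (· + 1)) (∑ i ∈ S, Nat.fib (i + 1)) ∧
      ZeckRep (insert 2 (S.image (· + 1))) ((∑ i ∈ S, Nat.fib (i + 1)) + Nat.fib 2)) := by
  obtain ⟨h2le, hcons, hsum⟩ := hS
  have hgt := phi_gt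
  have hlt := phi_lt
  -- decomposition
  have hterm : ∀ i ∈ S, (Nat.fib i : ℝ) * (2 - phi) = (Nat.fib (i-2) : ℝ) + (1 - phi)^i := by
    intro i hi
    obtain ⟨j, rfl⟩ : ∃ j, i = j + 2 := ⟨i - 2, by have := h2le i hi; omega⟩
    simpa using fib_key j
  set M : ℕ := ∑ i ∈ S, Nat.fib (i - 2) with hM
  set T : ℝ := ∑ i ∈ S, (1 - phi)^i with hT
  have hnT : (n : ℝ) * (2 - phi) = (M : ℝ) + T := by
    rw [← hsum]
    push_cast
    rw [Finset.sum_mul, Finset.sum_congr rfl hterm, Finset.sum_add_distrib]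
    rw [hM, hT]
    push_cast
    ring
  -- algebraic facts
  have esq : (phi-1)^2 = 2 - phi := by linear_combination phi_sq
  have e1 : (phi-1)^2*phi = phi - 1 := by linear_combination (phi-1)*phi_sq
  have e2 : (phi-1)^3*phi = 2 - phi := by linear_combination (phi^2-2*phi+2)*phi_sq
  have e4 : (phi-1)^4*phi = 2*phi - 3 := by
    linear_combination (phi^3-3*phi^2+4*phi-3)*phi_sq
  have e5 : (phi-1)^5*phi = 5 - 3*phi := by
    calc (phi-1)^5*phi = (phi-1)^2 * ((phi-1)^3*phi) := by ring
    _ = (2-phi)*(2-phi) := by rw [esq, e2]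
    _ = 5 - 3*phi := by linear_combination phi_sq
  -- global bounds on T
  have hub : T < phi - 1 := by
    have hb := sum_upper S 2 (fun i hi _ => h2le i hi) hcons
    linarith [hb, e1]
  have hlb : phi - 2 < T := by
    have hb := sum_lower S 3 (fun i hi ho => by
      have h2 := h2le i hi
      have hm := Nat.not_even_iff.mp ho
      omega) hcons
    linarith [hb, e2]
  -- floor at n+1 is M
  have hdn1 : ((n:ℝ)+1)*(2-phi) = ((2-phi) + T) + (M:ℕ) := by linear_combination hnT
  have hfloor1 : ⌊((n:ℝ)+1)*(2-phi)⌋ = (M : ℤ) := by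
    rw [hdn1, Int.floor_add_natCast]
    have h0 : ⌊(2-phi) + T⌋ = 0 := by
      rw [Int.floor_eq_zero_iff, Set.mem_Ico]
      constructor
      · linarith
      · linarith
    rw [h0]; simp
  have hdn2 : ((n:ℝ)+2)*(2-phi) = ((2*(2-phi)) + T) + (M:ℕ) := by linear_combination hnT
  have hfw : fibWord n = ⌊(2*(2-phi)) + T⌋ := by
    unfold fibWord
    rw [hfloor1, hdn2, Int.floor_add_natCast]
    ring
  by_cases h2S : 2 ∈ S
  · -- fibWord n = 1
    have h3S : 3 ∉ S := hcons 2 h2S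
    have hsplitA : (1-phi)^2 + ∑ i ∈ S.erase 2, (1-phi)^i = T := Finset.add_sum_erase S _ h2S
    have hlbA : -((phi-1)^5*phi) < ∑ i ∈ S.erase 2, (1-phi)^i := by
      apply sum_lower (S.erase 2) 5
      · intro i hi ho
        have hiS := Finset.mem_of_mem_erase hi
        have h2 := h2le i hiS
        have hne2 : i ≠ 2 := Finset.ne_of_mem_erase hi
        have hne3 : i ≠ 3 := fun h => h3S (h ▸ hiS)
        have hm := Nat.not_even_iff.mp ho
        omega
      · intro i hi h
        exact hcons i (Finset.mem_of_mem_erase hi) (Finset.mem_of_mem_erase h)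
    have hsq : (1-phi)^2 = 2 - phi := by linear_combination phi_sq
    have hTA : 2*phi - 3 < T := by
      rw [← hsplitA, hsq]
      linarith [hlbA, e5]
    have hfw1 : fibWord n = 1 := by
      rw [hfw]
      have : (1:ℤ) ≤ ⌊(2*(2-phi)) + T⌋ := by
        apply Int.le_floor.mpr
        push_cast
        linarith
      have h2' : ⌊(2*(2-phi)) + T⌋ < 2 := by
        apply Int.floor_lt.mpr
        push_cast
        linarith
      omega
    refine ⟨⟨fun _ => h2S, fun _ => hfw1⟩, fun h0 => absurd (hfw1 ▸ h0) (by norm_num)⟩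
  · -- fibWord n = 0
    have hubB : T < 2*phi - 3 := by
      have hb := sum_upper S 4 (fun i hi he => by
        have h2 := h2le i hi
        have hne2 : i ≠ 2 := fun h => h2S (h ▸ hi)
        have hm := Nat.even_iff.mp he
        omega) hcons
      linarith [hb, e4]
    have hfw0 : fibWord n = 0 := by
      rw [hfw]
      rw [Int.floor_eq_zero_iff, Set.mem_Ico]
      constructor
      · linarith
      · linarith
    constructor
    · constructor
      · intro h; rw [hfw0] at h; exact absurd h (by norm_num)
      · intro h; exact absurd h h2S
    · intro _
      have himg_ge : ∀ j ∈ S.image (· + 1), 3 ≤ j := by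
        intro j hj
        obtain ⟨i, hi, rfl⟩ := Finset.mem_image.mp hj
        have := h2le i hi; omega
      have himg_cons : ∀ j ∈ S.image (· + 1), j + 1 ∉ S.image (· + 1) := by
        intro j hj hj1
        obtain ⟨i, hi, rfl⟩ := Finset.mem_image.mp hj
        obtain ⟨i', hi', he⟩ := Finset.mem_image.mp hj1
        have : i' = i + 1 := by omega
        exact hcons i hi (this ▸ hi')
      have hinj : ∀ a ∈ S, ∀ b ∈ S, a + 1 = b + 1 → a = b := by intro a _ b _ h; omega
      have hsum_img : ∑ j ∈ S.image (· + 1), Nat.fib j = ∑ i ∈ S, Nat.fib (i + 1) :=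
        Finset.sum_image hinj
      have h3img : (3 : ℕ) ∉ S.image (· + 1) := by
        intro h
        obtain ⟨i, hi, he⟩ := Finset.mem_image.mp h
        have : i = 2 := by omega
        exact h2S (this ▸ hi)
      have h2img : (2 : ℕ) ∉ S.image (· + 1) := by
        intro h; exact absurd (himg_ge 2 h) (by norm_num)
      refine ⟨⟨fun j hj => le_trans (by norm_num) (himg_ge j hj), himg_cons, hsum_img⟩,
        ⟨?_, ?_, ?_⟩⟩
      · intro j hj
        rcases Finset.mem_insert.mp hj with rfl | hj'
        · exact le_refl 2
        · exact le_trans (by norm_num) (himg_ge j hj')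
      · intro j hj hj1
        rcases Finset.mem_insert.mp hj with rfl | hj'
        · rcases Finset.mem_insert.mp hj1 with h | h
          · exact absurd h (by norm_num)
          · exact h3img h
        · rcases Finset.mem_insert.mp hj1 with h | h
          · have := himg_ge j hj'; omega
          · exact himg_cons j hj' h
      · rw [Finset.sum_insert h2img, hsum_img]
        exact Nat.add_comm _ _
end
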